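/- If x ∈ D = { k/r^n ∈ [0,1] : k, n nonnegative integers }, then the right derivative of f_r at x equals +∞ and the left derivative of f_r at x equals -∞, i.e., lim_{h↓0} (f_r(x+h) - f_r(x))/h = +∞ (for x < 1) and lim_{h↓0} (f_r(x-h) - f_r(x))/(-h) = -∞ (for x > 0). -/

import Mathlib

open Set Filter MeasureTheory Metric Topology

/-- Distance from `x` to the nearest integer. -/
noncomputable def phiTW (x : ℝ) : ℝ := Metric.infDist x (Set.range (Int.cast : ℤ → ℝ))

/-- The Takagi–Van der Waerden function `f_r`. -/
noncomputable def fTW (r : ℕ) (x : ℝ) : ℝ :=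
  ∑' n : ℕ, (1 / (r : ℝ) ^ n) * phiTW ((r : ℝ) ^ n * x)

/-- `D_n = { k / r^(n-1) : k ∈ ℤ } ∩ [0,1]` (intended for `n ≥ 1`). -/
def DTW (r n : ℕ) : Set ℝ :=
  {y : ℝ | ∃ k : ℤ, y = (k : ℝ) / (r : ℝ) ^ (n - 1)} ∩ Set.Icc 0 1

/-- `g_n(x) = dist(x, D_n)`. -/
noncomputable def gTW (r n : ℕ) (x : ℝ) : ℝ := Metric.infDist x (DTW r n)

/-- `D̃_n`: midpoints of consecutive points of `D_n`. -/
def DtTW (r n : ℕ) : Set ℝ :=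
  {y : ℝ | ∃ k : ℤ, y = (2 * (k : ℝ) + 1) / (2 * (r : ℝ) ^ (n - 1))} ∩ Set.Icc 0 1

/-- `D = ⋃_{n ≥ 1} D_n`. -/
def DTWall (r : ℕ) : Set ℝ := ⋃ n ≥ 1, DTW r n

/-- `D̃ = ⋃_{n ≥ 1} D̃_n`. -/
def DtTWall (r : ℕ) : Set ℝ := ⋃ n ≥ 1, DtTW r n

lemma phiTW_le_abs (x : ℝ) (m : ℤ) : phiTW x ≤ |x - m| := by
  have := Metric.infDist_le_dist_of_mem (x := x)
    (s := Set.range (Int.cast : ℤ → ℝ)) ⟨m, rfl⟩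
  simpa [phiTW, Real.dist_eq] using this

lemma phiTW_eq (x : ℝ) : phiTW x = |x - round x| := by
  refine le_antisymm (phiTW_le_abs x (round x)) ?_
  rw [phiTW, Metric.infDist_eq_iInf]
  have : Nonempty (Set.range (Int.cast : ℤ → ℝ)) := ⟨⟨(0:ℝ), 0, by norm_num⟩⟩
  refine le_ciInf ?_
  rintro ⟨y, m, rfl⟩
  rw [Real.dist_eq]
  exact round_le x m

lemma phiTW_nonneg (x : ℝ) : 0 ≤ phiTW x := Metric.infDist_nonneg

lemma phiTW_le_half (x : ℝ) : phiTW x ≤ 1/2 := by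
  rw [phiTW_eq]; exact abs_sub_round x

lemma phiTW_intCast (m : ℤ) : phiTW (m : ℝ) = 0 :=
  Metric.infDist_zero_of_mem ⟨m, rfl⟩

lemma phiTW_int_add (m : ℤ) (x : ℝ) : phiTW ((m : ℝ) + x) = phiTW x := by
  rw [phiTW_eq, phiTW_eq, add_comm (m:ℝ) x, round_add_intCast]
  push_cast
  congr 1
  ring

lemma phiTW_neg (x : ℝ) : phiTW (-x) = phiTW x := by
  refine le_antisymm ?_ ?_
  · have h := phiTW_le_abs (-x) (-round x)
    have e1 : (-x) - ((-round x : ℤ):ℝ) = -(x - round x) := by push_cast; ring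
    rw [e1, abs_neg] at h
    rw [phiTW_eq x]
    exact h
  · have h := phiTW_le_abs x (-round (-x))
    have e1 : x - ((-round (-x) : ℤ):ℝ) = -((-x) - round (-x)) := by push_cast; ring
    rw [e1, abs_neg] at h
    rw [phiTW_eq (-x)]
    exact h

lemma phiTW_of_le_half (t : ℝ) (h0 : 0 ≤ t) (h1 : t ≤ 1/2) : phiTW t = t := by
  refine le_antisymm ?_ ?_
  · have h := phiTW_le_abs t 0
    simpa [abs_of_nonneg h0] using h
  · rw [phiTW_eq]
    rcases le_or_gt (round t) 0 with hm | hm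
    · have hm' : (round t : ℝ) ≤ 0 := by exact_mod_cast hm
      have : t ≤ t - round t := by linarith
      exact this.trans (le_abs_self _)
    · have hm' : (1:ℝ) ≤ (round t : ℝ) := by exact_mod_cast hm
      have : t ≤ (round t : ℝ) - t := by linarith
      calc t ≤ (round t : ℝ) - t := this
        _ ≤ |(round t : ℝ) - t| := le_abs_self _
        _ = |t - round t| := abs_sub_comm _ _

lemma phiTW_lipschitz (x y : ℝ) : |phiTW x - phiTW y| ≤ |x - y| := by
  have h := (Metric.lipschitz_infDist_pt
    (Set.range (Int.cast : ℤ → ℝ))).dist_le_mul x y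
  simpa [phiTW, Real.dist_eq] using h

lemma summable_termTW (r : ℕ) (hr : 2 ≤ r) (x : ℝ) :
    Summable (fun n : ℕ => (1 / (r:ℝ) ^ n) * phiTW ((r:ℝ) ^ n * x)) := by
  have hr1 : (1:ℝ) < (r:ℝ) := by exact_mod_cast lt_of_lt_of_le one_lt_two hr
  have hr0 : (0:ℝ) < (r:ℝ) := lt_trans one_pos hr1
  have hgeom : Summable (fun n : ℕ => (1/2:ℝ) * ((r:ℝ)⁻¹)^n) :=
    (summable_geometric_of_lt_one (by positivity)
      (by rw [inv_lt_one_iff₀]; right; exact hr1)).mul_left _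
  refine Summable.of_nonneg_of_le (fun n => ?_) (fun n => ?_) hgeom
  · exact mul_nonneg (by positivity) (phiTW_nonneg _)
  · have h1 : phiTW ((r:ℝ)^n * x) ≤ 1/2 := phiTW_le_half _
    have h2 : (0:ℝ) ≤ 1 / (r:ℝ)^n := by positivity
    calc (1 / (r:ℝ)^n) * phiTW ((r:ℝ)^n * x) ≤ (1 / (r:ℝ)^n) * (1/2) :=
          mul_le_mul_of_nonneg_left h1 h2
      _ = (1/2 : ℝ) * ((r:ℝ)⁻¹)^n := by rw [inv_pow]; ring

lemma fTW_sub (r N : ℕ) (hr : 2 ≤ r) (x : ℝ) (k : ℤ) (hk : (r:ℝ)^N * x = (k:ℝ)) (t : ℝ) :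
    fTW r (x + t) - fTW r x =
      (∑ i ∈ Finset.range N,
        (1/(r:ℝ)^i) * (phiTW ((r:ℝ)^i * (x+t)) - phiTW ((r:ℝ)^i * x)))
      + ∑' m : ℕ, (1/(r:ℝ)^(m+N)) * phiTW ((r:ℝ)^(m+N) * t) := by
  have hs1 := summable_termTW r hr (x + t)
  have hs2 := summable_termTW r hr x
  have hd := hs1.sub hs2
  have e1 : fTW r (x+t) - fTW r x = ∑' n : ℕ,
      ((1/(r:ℝ)^n) * phiTW ((r:ℝ)^n * (x+t)) - (1/(r:ℝ)^n) * phiTW ((r:ℝ)^n * x)) :=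
    (Summable.tsum_sub hs1 hs2).symm
  rw [e1, ← Summable.sum_add_tsum_nat_add N hd]
  congr 1
  · exact Finset.sum_congr rfl (fun i _ => (mul_sub _ _ _).symm)
  · refine tsum_congr fun m => ?_
    have hx' : (r:ℝ)^(m+N) * x = ((r^m * k : ℤ) : ℝ) := by
      push_cast [pow_add]
      rw [mul_assoc, hk]
    have h1 : (r:ℝ)^(m+N) * (x+t) = ((r^m*k:ℤ):ℝ) + (r:ℝ)^(m+N) * t := by
      rw [mul_add, hx']
    rw [h1, phiTW_int_add, hx', phiTW_intCast, mul_zero, sub_zero]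

set_option maxHeartbeats 1000000 in
lemma keyTW (r N : ℕ) (hr : 2 ≤ r) (x : ℝ) (k : ℤ) (hk : (r:ℝ)^N * x = (k:ℝ))
    (M : ℕ) (h : ℝ) (hh : 0 < h) (hsmall : (r:ℝ)^(M+N) * h ≤ 1/2)
    (ε : ℝ) (hε : ε = 1 ∨ ε = -1) :
    ((M:ℝ) - N) * h ≤ fTW r (x + ε * h) - fTW r x := by
  have hr1 : (1:ℝ) < (r:ℝ) := by exact_mod_cast lt_of_lt_of_le one_lt_two hr
  have hr0 : (0:ℝ) < (r:ℝ) := lt_trans one_pos hr1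
  have habs : |ε| = 1 := by rcases hε with h'|h' <;> simp [h']
  have hphi : ∀ y : ℝ, phiTW (ε * y) = phiTW y := by
    rcases hε with h'|h' <;> intro y <;> subst h'
    · rw [one_mul]
    · rw [neg_one_mul, phiTW_neg]
  rw [fTW_sub r N hr x k hk (ε*h)]
  have hfin : -((N:ℝ) * h) ≤ ∑ i ∈ Finset.range N,
      (1/(r:ℝ)^i) * (phiTW ((r:ℝ)^i * (x+ε*h)) - phiTW ((r:ℝ)^i * x)) := by
    have hterm : ∀ i ∈ Finset.range N, -h ≤
        (1/(r:ℝ)^i) * (phiTW ((r:ℝ)^i*(x+ε*h)) - phiTW ((r:ℝ)^i*x)) := by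
      intro i _
      have hpow : (0:ℝ) < (r:ℝ)^i := pow_pos hr0 i
      have hlip := phiTW_lipschitz ((r:ℝ)^i*(x+ε*h)) ((r:ℝ)^i*x)
      have hab : |(r:ℝ)^i*(x+ε*h) - (r:ℝ)^i*x| = (r:ℝ)^i * h := by
        have e : (r:ℝ)^i*(x+ε*h) - (r:ℝ)^i*x = (r:ℝ)^i * (ε * h) := by ring
        rw [e, abs_mul, abs_mul, habs, abs_of_pos hh, abs_of_pos hpow]
        ring
      have hd : -((r:ℝ)^i * h) ≤ phiTW ((r:ℝ)^i*(x+ε*h)) - phiTW ((r:ℝ)^i*x) := by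
        rw [hab] at hlip
        have := neg_abs_le (phiTW ((r:ℝ)^i*(x+ε*h)) - phiTW ((r:ℝ)^i*x))
        linarith [abs_nonneg (phiTW ((r:ℝ)^i*(x+ε*h)) - phiTW ((r:ℝ)^i*x)),
          (abs_le.1 hlip).1]
      have hmul := mul_le_mul_of_nonneg_left hd (le_of_lt (by positivity : (0:ℝ) < 1/(r:ℝ)^i))
      have heq : (1/(r:ℝ)^i) * (-((r:ℝ)^i * h)) = -h := by field_simp
      linarith
    calc -((N:ℝ)*h) = ∑ _i ∈ Finset.range N, (-h) := by
          rw [Finset.sum_const, Finset.card_range, nsmul_eq_mul]; ring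
      _ ≤ _ := Finset.sum_le_sum hterm
  have hsumm : Summable (fun m : ℕ => (1/(r:ℝ)^(m+N)) * phiTW ((r:ℝ)^(m+N) * (ε*h))) :=
    (summable_nat_add_iff N).2 (summable_termTW r hr (ε*h))
  have htail : (M:ℝ) * h ≤ ∑' m : ℕ, (1/(r:ℝ)^(m+N)) * phiTW ((r:ℝ)^(m+N) * (ε*h)) := by
    have hterm : ∀ m ∈ Finset.range M,
        (1/(r:ℝ)^(m+N)) * phiTW ((r:ℝ)^(m+N) * (ε*h)) = h := by
      intro m hm
      have hmlt : m < M := Finset.mem_range.1 hm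
      have hple : (r:ℝ)^(m+N) ≤ (r:ℝ)^(M+N) :=
        pow_le_pow_right₀ (le_of_lt hr1) (by omega)
      have hle : (r:ℝ)^(m+N) * h ≤ 1/2 :=
        le_trans (mul_le_mul_of_nonneg_right hple hh.le) hsmall
      have hge : (0:ℝ) ≤ (r:ℝ)^(m+N) * h := by positivity
      have h1 : phiTW ((r:ℝ)^(m+N) * (ε*h)) = (r:ℝ)^(m+N) * h := by
        rw [mul_left_comm, hphi, phiTW_of_le_half _ hge hle]
      rw [h1]
      field_simp
    have hpos : ∀ m, m ∉ Finset.range M →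
        0 ≤ (1/(r:ℝ)^(m+N)) * phiTW ((r:ℝ)^(m+N) * (ε*h)) := fun m _ =>
      mul_nonneg (by positivity) (phiTW_nonneg _)
    calc (M:ℝ) * h = ∑ m ∈ Finset.range M,
          (1/(r:ℝ)^(m+N)) * phiTW ((r:ℝ)^(m+N) * (ε*h)) := by
          rw [Finset.sum_congr rfl hterm, Finset.sum_const, Finset.card_range, nsmul_eq_mul]
      _ ≤ _ := Summable.sum_le_tsum _ hpos hsumm
  linarith

theorem stmt7 (r : ℕ) (hr : 2 ≤ r) (x : ℝ) (hx : x ∈ Set.Icc (0:ℝ) 1)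
    (hxD : ∃ k n : ℕ, x = (k : ℝ) / (r : ℝ) ^ n) :
    (x < 1 → Tendsto (fun h : ℝ => (fTW r (x + h) - fTW r x) / h) (𝓝[>] 0) atTop) ∧
    (0 < x → Tendsto (fun h : ℝ => (fTW r (x - h) - fTW r x) / (-h)) (𝓝[>] 0) atBot) := by
  obtain ⟨k0, N, hxeq⟩ := hxD
  have hr1 : (1:ℝ) < (r:ℝ) := by exact_mod_cast lt_of_lt_of_le one_lt_two hr
  have hr0 : (0:ℝ) < (r:ℝ) := lt_trans one_pos hr1
  have hk : (r:ℝ)^N * x = (((k0:ℤ)):ℝ) := by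
    have hp : ((r:ℝ)^N) ≠ 0 := by positivity
    rw [hxeq]
    push_cast
    field_simp
  constructor
  · intro _
    rw [Filter.tendsto_atTop]
    intro b
    set M : ℕ := N + ⌈|b|⌉₊ with hM
    have hbM : b ≤ (M:ℝ) - N := by
      have h1 : |b| ≤ (⌈|b|⌉₊:ℝ) := Nat.le_ceil _
      have h2 := le_abs_self b
      have : (M:ℝ) = (N:ℝ) + (⌈|b|⌉₊:ℝ) := by rw [hM]; push_cast; ring
      linarith
    have hδ : (0:ℝ) < 1/(2*(r:ℝ)^(M+N)) := by positivity
    filter_upwards [Ioc_mem_nhdsGT hδ] with h hh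
    obtain ⟨hh0, hhδ⟩ := hh
    have hp : (0:ℝ) < (r:ℝ)^(M+N) := pow_pos hr0 _
    have hsmall : (r:ℝ)^(M+N) * h ≤ 1/2 := by
      have := mul_le_mul_of_nonneg_left hhδ hp.le
      calc (r:ℝ)^(M+N) * h ≤ (r:ℝ)^(M+N) * (1/(2*(r:ℝ)^(M+N))) := this
        _ = 1/2 := by field_simp
    have hkey := keyTW r N hr x (k0:ℤ) hk M h hh0 hsmall 1 (Or.inl rfl)
    rw [one_mul] at hkey
    rw [le_div_iff₀ hh0]
    calc b * h ≤ ((M:ℝ)-N)*h := mul_le_mul_of_nonneg_right hbM hh0.le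
      _ ≤ fTW r (x+h) - fTW r x := hkey
  · intro _
    rw [Filter.tendsto_atBot]
    intro b
    set M : ℕ := N + ⌈|b|⌉₊ with hM
    have hbM : -b ≤ (M:ℝ) - N := by
      have h1 : |b| ≤ (⌈|b|⌉₊:ℝ) := Nat.le_ceil _
      have h2 := neg_abs_le b
      have : (M:ℝ) = (N:ℝ) + (⌈|b|⌉₊:ℝ) := by rw [hM]; push_cast; ring
      linarith
    have hδ : (0:ℝ) < 1/(2*(r:ℝ)^(M+N)) := by positivity
    filter_upwards [Ioc_mem_nhdsGT hδ] with h hh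
    obtain ⟨hh0, hhδ⟩ := hh
    have hp : (0:ℝ) < (r:ℝ)^(M+N) := pow_pos hr0 _
    have hsmall : (r:ℝ)^(M+N) * h ≤ 1/2 := by
      have := mul_le_mul_of_nonneg_left hhδ hp.le
      calc (r:ℝ)^(M+N) * h ≤ (r:ℝ)^(M+N) * (1/(2*(r:ℝ)^(M+N))) := this
        _ = 1/2 := by field_simp
    have hkey := keyTW r N hr x (k0:ℤ) hk M h hh0 hsmall (-1) (Or.inr rfl)
    have hx' : x + (-1)*h = x - h := by ring
    rw [hx'] at hkey
    rw [div_neg, neg_le]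
    rw [le_div_iff₀ hh0]
    calc -b * h ≤ ((M:ℝ)-N)*h := mul_le_mul_of_nonneg_right hbM hh0.le
      _ ≤ fTW r (x-h) - fTW r x := hkey
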